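/- Let f_i : ℝ^{d_i} → ℝ^{d_{i-1}} for i = 1,…,T be continuously differentiable, where each f_i is L_{f_i}-Lipschitz and each ∇f_i is L_{∇f_i}-Lipschitz. Then the gradient of the composition F = f_1 ∘ f_2 ∘ ⋯ ∘ f_T is Lipschitz continuous with constant L_{∇F} = Σ_{j=1}^T [ L_{∇f_j} · (Π_{l=1}^{j-1} L_{f_l}) · (Π_{l=j+1}^T L_{f_l}²) ]. -/

import Mathlib

open scoped BigOperators

noncomputable section

/-- The nested composition `f 0 ∘ f 1 ∘ ⋯ ∘ f (k-1)`, mapping `ℝ^{d_k} → ℝ^{d_0}`. -/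
def nestedComp (d : ℕ → ℕ)
    (f : ∀ i : ℕ, EuclideanSpace ℝ (Fin (d (i + 1))) → EuclideanSpace ℝ (Fin (d i))) :
    ∀ k : ℕ, EuclideanSpace ℝ (Fin (d k)) → EuclideanSpace ℝ (Fin (d 0))
  | 0 => id
  | k + 1 => nestedComp d f k ∘ f k

section Aux

variable (d : ℕ → ℕ)
    (f : ∀ i : ℕ, EuclideanSpace ℝ (Fin (d (i + 1))) → EuclideanSpace ℝ (Fin (d i)))
    (Lf Lg : ℕ → ℝ)

lemma diff_nestedComp (hdiff : ∀ i, Differentiable ℝ (f i)) :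
    ∀ k, Differentiable ℝ (nestedComp d f k)
  | 0 => differentiable_id
  | (k + 1) => (diff_nestedComp hdiff k).comp (hdiff k)

lemma lip_nestedComp (hLf : ∀ i, 0 ≤ Lf i)
    (hlip : ∀ i, LipschitzWith (Lf i).toNNReal (f i)) :
    ∀ k, LipschitzWith (∏ l ∈ Finset.range k, Lf l).toNNReal (nestedComp d f k) := by
  intro k
  induction k with
  | zero => simpa [nestedComp] using LipschitzWith.id
  | succ k ih =>
      have hprod : (∏ l ∈ Finset.range (k + 1), Lf l).toNNReal
          = (∏ l ∈ Finset.range k, Lf l).toNNReal * (Lf k).toNNReal := by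
        rw [Finset.prod_range_succ, Real.toNNReal_mul
          (Finset.prod_nonneg fun i _ => hLf i)]
      rw [hprod]
      exact ih.comp (hlip k)

end Aux

/-- If each `f_i` is `L_{f_i}`-Lipschitz and each derivative `∇f_i` is
`L_{∇f_i}`-Lipschitz, then the derivative of the composition `F = f_1 ∘ ⋯ ∘ f_T` is
Lipschitz with constant `Σ_{j=1}^T L_{∇f_j}·(Π_{l<j} L_{f_l})·(Π_{l>j} L_{f_l}²)`
(here indexed from `0`, so `f j` plays the role of `f_{j+1}`). -/
theorem stmt4 (T : ℕ) (hT : 0 < T) (d : ℕ → ℕ) (hd0 : d 0 = 1)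
    (f : ∀ i : ℕ, EuclideanSpace ℝ (Fin (d (i + 1))) → EuclideanSpace ℝ (Fin (d i)))
    (Lf Lg : ℕ → ℝ) (hLf : ∀ i, 0 ≤ Lf i) (hLg : ∀ i, 0 ≤ Lg i)
    (hdiff : ∀ i, Differentiable ℝ (f i))
    (hlip : ∀ i, LipschitzWith (Lf i).toNNReal (f i))
    (hglip : ∀ i, LipschitzWith (Lg i).toNNReal (fderiv ℝ (f i))) :
    LipschitzWith
      (∑ j ∈ Finset.range T,
          Lg j * (∏ l ∈ Finset.range j, Lf l) * ∏ l ∈ Finset.Ico (j + 1) T, Lf l ^ 2).toNNReal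
      (fderiv ℝ (nestedComp d f T)) := by
  clear hT hd0
  set C : ℕ → ℝ := fun k => ∑ j ∈ Finset.range k,
      Lg j * (∏ l ∈ Finset.range j, Lf l) * ∏ l ∈ Finset.Ico (j + 1) k, Lf l ^ 2 with hC
  have hCnonneg : ∀ k, 0 ≤ C k := fun k =>
    Finset.sum_nonneg fun j _ => mul_nonneg (mul_nonneg (hLg j)
      (Finset.prod_nonneg fun i _ => hLf i))
      (Finset.prod_nonneg fun i _ => pow_nonneg (hLf i) 2)
  -- recurrence: C (k+1) = Lf k ^ 2 * C k + Lg k * ∏_{l<k} Lf l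
  have hCrec : ∀ k, C (k + 1) = Lf k ^ 2 * C k + Lg k * ∏ l ∈ Finset.range k, Lf l := by
    intro k
    simp only [hC]
    rw [Finset.sum_range_succ]
    have h1 : ∀ j ∈ Finset.range k,
        Lg j * (∏ l ∈ Finset.range j, Lf l) * ∏ l ∈ Finset.Ico (j + 1) (k + 1), Lf l ^ 2
        = Lf k ^ 2 * (Lg j * (∏ l ∈ Finset.range j, Lf l) *
            ∏ l ∈ Finset.Ico (j + 1) k, Lf l ^ 2) := by
      intro j hj
      have hjk : j + 1 ≤ k := Nat.succ_le_of_lt (Finset.mem_range.mp hj)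
      rw [Finset.prod_Ico_succ_top hjk]
      ring
    rw [Finset.sum_congr rfl h1, ← Finset.mul_sum]
    simp [mul_comm]
  suffices H : ∀ k, LipschitzWith (C k).toNNReal (fderiv ℝ (nestedComp d f k)) from H T
  intro k
  induction k with
  | zero =>
      have : fderiv ℝ (nestedComp d f 0) = fun _ => ContinuousLinearMap.id ℝ _ := by
        funext x
        exact fderiv_id
      have h0 : (C 0).toNNReal = 0 := by simp [hC]
      rw [this, h0]
      exact LipschitzWith.const _
  | succ k ih =>
      apply LipschitzWith.of_dist_le_mul
      intro x y
      have hchain : ∀ z, fderiv ℝ (nestedComp d f (k + 1)) z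
          = (fderiv ℝ (nestedComp d f k) (f k z)).comp (fderiv ℝ (f k) z) := by
        intro z
        exact fderiv_comp z ((diff_nestedComp d f hdiff k) (f k z)) ((hdiff k) z)
      rw [dist_eq_norm, hchain x, hchain y]
      set A := fderiv ℝ (nestedComp d f k)
      set B := fderiv ℝ (f k)
      have key : (A (f k x)).comp (B x) - (A (f k y)).comp (B y)
          = (A (f k x) - A (f k y)).comp (B x) + (A (f k y)).comp (B x - B y) := by
        simp [ContinuousLinearMap.sub_comp, ContinuousLinearMap.comp_sub]
      rw [key]
      have hBnorm : ∀ z, ‖B z‖ ≤ Lf k := by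
        intro z
        have := norm_fderiv_le_of_lipschitz ℝ (x₀ := z) (hlip k)
        simpa [Real.coe_toNNReal _ (hLf k)] using this
      have hAnorm : ∀ z, ‖A z‖ ≤ ∏ l ∈ Finset.range k, Lf l := by
        intro z
        have := norm_fderiv_le_of_lipschitz ℝ (x₀ := z)
          (lip_nestedComp d f Lf hLf hlip k)
        simpa [Real.coe_toNNReal _ (Finset.prod_nonneg fun i _ => hLf i)] using this
      have hAlip : ‖A (f k x) - A (f k y)‖ ≤ C k * (Lf k * ‖x - y‖) := by
        have h1 : ‖A (f k x) - A (f k y)‖ ≤ C k * ‖f k x - f k y‖ := by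
          have := ih.dist_le_mul (f k x) (f k y)
          simpa [dist_eq_norm, Real.coe_toNNReal _ (hCnonneg k)] using this
        have h2 : ‖f k x - f k y‖ ≤ Lf k * ‖x - y‖ := by
          have := (hlip k).dist_le_mul x y
          simpa [dist_eq_norm, Real.coe_toNNReal _ (hLf k)] using this
        calc ‖A (f k x) - A (f k y)‖ ≤ C k * ‖f k x - f k y‖ := h1
          _ ≤ C k * (Lf k * ‖x - y‖) := by
              exact mul_le_mul_of_nonneg_left h2 (hCnonneg k)
      have hBlip : ‖B x - B y‖ ≤ Lg k * ‖x - y‖ := by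
        have := (hglip k).dist_le_mul x y
        simpa [dist_eq_norm, Real.coe_toNNReal _ (hLg k)] using this
      have hnn : (0:ℝ) ≤ ‖x - y‖ := norm_nonneg _
      calc ‖(A (f k x) - A (f k y)).comp (B x) + (A (f k y)).comp (B x - B y)‖
          ≤ ‖(A (f k x) - A (f k y)).comp (B x)‖ + ‖(A (f k y)).comp (B x - B y)‖ :=
            norm_add_le _ _
        _ ≤ ‖A (f k x) - A (f k y)‖ * ‖B x‖ + ‖A (f k y)‖ * ‖B x - B y‖ := by
            gcongr <;> exact ContinuousLinearMap.opNorm_comp_le _ _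
        _ ≤ (C k * (Lf k * ‖x - y‖)) * Lf k
              + (∏ l ∈ Finset.range k, Lf l) * (Lg k * ‖x - y‖) := by
            refine add_le_add (mul_le_mul hAlip (hBnorm x) (norm_nonneg _) ?_)
              (mul_le_mul (hAnorm _) hBlip (norm_nonneg _)
                (Finset.prod_nonneg fun i _ => hLf i))
            exact mul_nonneg (hCnonneg k) (mul_nonneg (hLf k) hnn)
        _ = (Lf k ^ 2 * C k + Lg k * ∏ l ∈ Finset.range k, Lf l) * ‖x - y‖ := by ring
        _ = ↑(C (k + 1)).toNNReal * dist x y := by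
            rw [hCrec k, dist_eq_norm,
              Real.coe_toNNReal _ (by rw [← hCrec k]; exact hCnonneg (k + 1))]
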